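/- Let g be a real semisimple Lie algebra with Cartan involution θ and restricted root spaces with respect to a maximal abelian a ⊆ p. Let α be a simple root and ξ ∈ g_α nonzero. Then for g = Exp(-ξ/|ξ|²) (so Ad(g) = e^{-ad(ξ)/|ξ|²}), one has Ad(g⁻¹)*(H_α + ξ) = e^{-ad(θξ)/|ξ|²}(H_α + ξ) = ξ - (|α|²/(2|ξ|²)) θξ. In particular, any subspace of k_0 ⊕ a ⊕ n orthogonal to H_α + ξ is mapped by Ad(g) into a subspace of k_0 ⊕ a ⊕ n orthogonal to ξ. -/

import Mathlib

/-- The inner product `⟨X,Y⟩ = -B(X, θY)` associated with a Cartan involution `θ`. -/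
noncomputable def cip (L : Type*) [LieRing L] [LieAlgebra ℝ L]
    (θ : L →ₗ⁅ℝ⁆ L) (X Y : L) : ℝ :=
  -(killingForm ℝ L X (θ Y))

/-- `E` is the exponential `e^f` of the endomorphism `f`. -/
def IsExpOf (L : Type*) [LieRing L] [LieAlgebra ℝ L] [TopologicalSpace L]
    (f E : Module.End ℝ L) : Prop :=
  ∀ Y : L, Filter.Tendsto
    (fun N : ℕ => ∑ k ∈ Finset.range N, ((k.factorial : ℝ)⁻¹ • (f ^ k)) Y)
    Filter.atTop (nhds (E Y))

/-- For a simple root `α` and nonzero `ξ ∈ g_α`, with `g = Exp(-ξ/|ξ|²)` one has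
`Ad(g⁻¹)* (H_α + ξ) = e^{-ad(θξ)/|ξ|²}(H_α + ξ) = ξ - (|α|²/(2|ξ|²)) θξ`.  In particular
any subspace of `k₀ ⊕ a ⊕ n` orthogonal to `H_α + ξ` is mapped by `Ad(g)` into a subspace
of `k₀ ⊕ a ⊕ n` orthogonal to `ξ`. -/
theorem conjugate_normal_vector
    (L : Type*) [LieRing L] [LieAlgebra ℝ L] [FiniteDimensional ℝ L]
    [LieAlgebra.IsSemisimple ℝ L]
    [TopologicalSpace L] [IsTopologicalAddGroup L] [ContinuousSMul ℝ L] [T2Space L]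
    (θ : L →ₗ⁅ℝ⁆ L) (hθ : Function.Involutive θ)
    (hpos : ∀ X : L, X ≠ 0 → 0 < cip L θ X X)
    (k0 a n : Submodule ℝ L)
    (Hα ξ : L) (hHα : Hα ∈ a) (hξn : ξ ∈ n) (hξ0 : ξ ≠ 0)
    -- `[θξ, H_α] = |α|² θξ` (root relation for `θξ ∈ g_{-α}`)
    (h1 : ⁅θ ξ, Hα⁆ = cip L θ Hα Hα • θ ξ)
    -- `[θξ, ξ] = |ξ|² H_α`
    (h2 : ⁅θ ξ, ξ⁆ = cip L θ ξ ξ • Hα)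
    (E' : Module.End ℝ L)
    (hE' : IsExpOf L ((-(cip L θ ξ ξ)⁻¹) • LieAlgebra.ad ℝ L (θ ξ)) E')
    (Eg : Module.End ℝ L)
    (hEg : IsExpOf L ((-(cip L θ ξ ξ)⁻¹) • LieAlgebra.ad ℝ L ξ) Eg)
    -- `Ad(g)` preserves `k₀ ⊕ a ⊕ n`
    (hpres : ∀ x ∈ k0 ⊔ a ⊔ n, Eg x ∈ k0 ⊔ a ⊔ n)
    -- `⟨Ad(g) x, Ad(g⁻¹)* y⟩ = ⟨x, y⟩`
    (hinv : ∀ x y : L, cip L θ (Eg x) (E' y) = cip L θ x y)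
    -- `k₀ ⊕ a ⊕ n` is orthogonal to `θξ ∈ θn`
    (horthθ : ∀ x ∈ k0 ⊔ a ⊔ n, cip L θ x (θ ξ) = 0) :
    E' (Hα + ξ) = ξ - (cip L θ Hα Hα / (2 * cip L θ ξ ξ)) • θ ξ ∧
    (∀ x ∈ k0 ⊔ a ⊔ n, cip L θ x (Hα + ξ) = 0 →
      Eg x ∈ k0 ⊔ a ⊔ n ∧ cip L θ (Eg x) ξ = 0) := by

  classical
  set c := cip L θ ξ ξ with hc
  set b := cip L θ Hα Hα with hb
  have hcne : c ≠ 0 := ne_of_gt (hpos ξ hξ0)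
  set f : Module.End ℝ L := (-(c)⁻¹) • LieAlgebra.ad ℝ L (θ ξ) with hf
  have hfH : f Hα = (-(c⁻¹ * b)) • θ ξ := by
    simp only [hf, LinearMap.smul_apply, LieAlgebra.ad_apply, h1, ← hb, smul_smul]
    ring_nf
  have hfξ : f ξ = -Hα := by
    simp only [hf, LinearMap.smul_apply, LieAlgebra.ad_apply, h2, ← hc, smul_smul]
    rw [neg_mul, inv_mul_cancel₀ hcne]
    simp
  have hfθξ : f (θ ξ) = 0 := by
    simp [hf, LieAlgebra.ad_apply]
  have hv1 : f (Hα + ξ) = (-(c⁻¹ * b)) • θ ξ + -Hα := by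
    rw [map_add, hfH, hfξ]
  have hv2 : f ((-(c⁻¹ * b)) • θ ξ + -Hα) = (c⁻¹ * b) • θ ξ := by
    rw [map_add, map_smul, hfθξ, map_neg, hfH]
    simp
  have hv3 : f ((c⁻¹ * b) • θ ξ) = 0 := by rw [map_smul, hfθξ, smul_zero]
  have h3v : (f ^ 3) (Hα + ξ) = 0 := by
    rw [pow_succ, pow_succ, pow_one, Module.End.mul_apply, Module.End.mul_apply,
      hv1, hv2, hv3]
  have hzero : ∀ m : ℕ, (f ^ (m + 3)) (Hα + ξ) = 0 := by
    intro m
    rw [pow_add, Module.End.mul_apply, h3v, map_zero]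
  set T : L := ξ - (b / (2 * c)) • θ ξ with hT
  have hsum : ∀ N : ℕ,
      (∑ k ∈ Finset.range (N + 3), ((k.factorial : ℝ)⁻¹ • (f ^ k)) (Hα + ξ)) = T := by
    intro N
    induction N with
    | zero =>
        rw [show (0 + 3 : ℕ) = 3 from rfl]
        have hsq : (f ^ 2) (Hα + ξ) = (c⁻¹ * b) • θ ξ := by
          rw [pow_two, Module.End.mul_apply, hv1, hv2]
        rw [Finset.sum_range_succ, Finset.sum_range_succ, Finset.sum_range_one]
        simp only [LinearMap.smul_apply, pow_zero, pow_one, Module.End.one_apply,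
          Nat.factorial_zero, Nat.factorial_one, Nat.factorial_two, Nat.cast_one,
          Nat.cast_ofNat, inv_one, one_smul, hv1, hsq]
        rw [smul_smul, hT]
        have h6 : Hα + ξ + (-(c⁻¹ * b) • θ ξ + -Hα) + ((2:ℝ)⁻¹ * (c⁻¹ * b)) • θ ξ
            = ξ + ((-(c⁻¹ * b)) + (2:ℝ)⁻¹ * (c⁻¹ * b)) • θ ξ := by
          rw [add_smul]; abel
        have h5 : (-(c⁻¹ * b)) + (2:ℝ)⁻¹ * (c⁻¹ * b) = -(b / (2 * c)) := by
          field_simp; ring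
        rw [h6, h5, neg_smul, ← sub_eq_add_neg]
    | succ N ih =>
        rw [show N + 1 + 3 = (N + 3) + 1 from rfl, Finset.sum_range_succ, ih]
        simp [hzero N]
  have hlim := (hE' (Hα + ξ)).comp (Filter.tendsto_add_atTop_nat 3)
  have heq : ((fun N : ℕ => ∑ k ∈ Finset.range N,
      ((k.factorial : ℝ)⁻¹ • (((-(c)⁻¹) • LieAlgebra.ad ℝ L (θ ξ)) ^ k)) (Hα + ξ)) ∘
      (fun N => N + 3)) = fun _ => T := by
    funext N
    exact hsum N
  rw [heq] at hlim
  have hE : E' (Hα + ξ) = T := tendsto_nhds_unique hlim tendsto_const_nhds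
  refine ⟨hE, ?_⟩
  intro x hx hxo
  refine ⟨hpres x hx, ?_⟩
  have h4 : cip L θ (Eg x) (E' (Hα + ξ)) = 0 := by rw [hinv]; exact hxo
  rw [hE, hT] at h4
  have h5 : cip L θ (Eg x) (θ ξ) = 0 := horthθ _ (hpres x hx)
  have hθs : θ (ξ - (b / (2 * c)) • θ ξ) = θ ξ - (b / (2 * c)) • θ (θ ξ) := by
    rw [map_sub, map_smul]
  have hexp : cip L θ (Eg x) (ξ - (b / (2 * c)) • θ ξ)
      = cip L θ (Eg x) ξ - (b / (2 * c)) * cip L θ (Eg x) (θ ξ) := by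
    simp only [cip, hθs, map_sub, map_smul, smul_eq_mul]
    ring
  rw [hexp, h5] at h4
  simpa using h4
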